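/- Let $A \subset \mathbb{R}^d$ be a convex body with $0 \in A$, let $\gamma > 1$, and let $x \notin \gamma A$. Then $\Psi_{\gamma A}(x) \ge \Psi_A(x)$, where $\Psi_K(x)$ denotes the average depth/distance ratio of $K$ seen from $x$. -/

import Mathlib

open MeasureTheory Set Pointwise

/-- Orthogonal projection of `y` onto the hyperplane `x^⊥`. -/
noncomputable def projHyp {d : ℕ} (x y : EuclideanSpace ℝ (Fin d)) : EuclideanSpace ℝ (Fin d) :=
  (Submodule.orthogonalProjectionOnto (Submodule.span ℝ {x})ᗮ y : EuclideanSpace ℝ (Fin d))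

/-- The shadow of `K` in direction `x`: projection of `K` onto `x^⊥`. -/
noncomputable def shadow {d : ℕ} (K : Set (EuclideanSpace ℝ (Fin d)))
    (x : EuclideanSpace ℝ (Fin d)) : Set (EuclideanSpace ℝ (Fin d)) :=
  projHyp x '' K

/-- The point of `K` on the line `{z + t x : t ∈ ℝ}` minimising `⟨y, x⟩`. -/
noncomputable def piK {d : ℕ} (K : Set (EuclideanSpace ℝ (Fin d)))
    (x z : EuclideanSpace ℝ (Fin d)) : EuclideanSpace ℝ (Fin d) :=
  z + (sInf {t : ℝ | z + t • x ∈ K}) • x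

/-- The depth/distance ratio `Ψ_K(x, z)`: the ratio of the one-dimensional Hausdorff
measure of `K ∩ [x, π_K(x,z)]` to the length of the chord `[x, π_K(x,z)]`. -/
noncomputable def PsiPt {d : ℕ} (K : Set (EuclideanSpace ℝ (Fin d)))
    (x z : EuclideanSpace ℝ (Fin d)) : ℝ :=
  ((μH[1] (K ∩ segment ℝ x (piK K x z))) / (μH[1] (segment ℝ x (piK K x z)))).toReal

/-- The average depth/distance ratio `Ψ_K(x)` with respect to the uniform
probability measure on the shadow `P_x(K)`. -/
noncomputable def PsiAvg {d : ℕ} (K : Set (EuclideanSpace ℝ (Fin d)))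
    (x : EuclideanSpace ℝ (Fin d)) : ℝ :=
  (∫ z in shadow K x, PsiPt K x z ∂(μH[(d : ℝ) - 1])) / (μH[(d : ℝ) - 1] (shadow K x)).toReal

/-- The maximum depth/distance ratio `Ψ^∞_K(x)`. -/
noncomputable def PsiSup {d : ℕ} (K : Set (EuclideanSpace ℝ (Fin d)))
    (x : EuclideanSpace ℝ (Fin d)) : ℝ :=
  sSup (PsiPt K x '' shadow K x)

namespace PsiAux

variable {d : ℕ}

local notation "E" => EuclideanSpace ℝ (Fin d)

noncomputable def coefX (x y : E) : ℝ := (inner ℝ x y : ℝ) / ‖x‖ ^ 2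

noncomputable def projL (x : E) : E →L[ℝ] E :=
  (Submodule.span ℝ {x})ᗮ.subtypeL.comp
    (Submodule.orthogonalProjectionOnto (Submodule.span ℝ {x})ᗮ)

lemma projHyp_eq_projL (x y : E) : projHyp x y = projL x y := rfl

lemma projHyp_continuous (x : E) : Continuous (projHyp x) := by
  show Continuous fun y => projHyp x y
  simp only [projHyp_eq_projL]
  exact (projL x).continuous

lemma projHyp_mem (x y : E) : projHyp x y ∈ (Submodule.span ℝ {x})ᗮ :=
  (Submodule.orthogonalProjectionOnto _ y).2

lemma inner_x_projHyp (x y : E) : (inner ℝ x (projHyp x y) : ℝ) = 0 :=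
  (Submodule.mem_orthogonal _ _).1 (projHyp_mem x y) x (Submodule.mem_span_singleton_self x)

lemma projHyp_smul (x : E) (c : ℝ) (y : E) : projHyp x (c • y) = c • projHyp x y := by
  simp only [projHyp_eq_projL, _root_.map_smul]

lemma projHyp_eq_self {x z : E} (hz : z ∈ (Submodule.span ℝ {x})ᗮ) : projHyp x z = z := by
  unfold projHyp
  exact congrArg Subtype.val (Submodule.orthogonalProjectionOnto_mem_subspace_eq_self ⟨z, hz⟩)

lemma projHyp_x (x : E) : projHyp x x = 0 := by
  unfold projHyp
  rw [Submodule.orthogonalProjectionOnto_apply_of_mem_orthogonal]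
  · rfl
  · rw [Submodule.orthogonal_orthogonal]
    exact Submodule.mem_span_singleton_self x

lemma projHyp_add_smul (x z : E) (t : ℝ) : projHyp x (z + t • x) = projHyp x z := by
  simp only [projHyp_eq_projL, map_add, _root_.map_smul]
  have h : (projL x) x = 0 := projHyp_x x
  rw [h, smul_zero, add_zero]

lemma decomp (x : E) (hx : x ≠ 0) (y : E) : y = projHyp x y + coefX x y • x := by
  have h := Submodule.starProjection_add_starProjection_orthogonal (K := Submodule.span ℝ {x}) y
  have h2 : (Submodule.span ℝ {x}).starProjection y = coefX x y • x := by
    rw [Submodule.starProjection_singleton]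
    rfl
  rw [h2] at h
  rw [add_comm] at h
  exact h.symm


def Tset (K : Set E) (x z : E) : Set ℝ := {t : ℝ | z + t • x ∈ K}

lemma piK_def (K : Set E) (x z : E) : piK K x z = z + sInf (Tset K x z) • x := rfl

section Body

lemma Tset_closed {K : Set E} {x : E} (hKc : IsCompact K) {z : E} : IsClosed (Tset K x z) := by
  have : Tset K x z = (fun t : ℝ => z + t • x) ⁻¹' K := rfl
  rw [this]
  exact hKc.isClosed.preimage (continuous_const.add (continuous_id.smul continuous_const))

lemma Tset_bddBelow {K : Set E} {x : E} (hKc : IsCompact K) (hx0 : x ≠ 0) {z : E} : BddBelow (Tset K x z) := by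
  obtain ⟨R, hR⟩ := hKc.isBounded.subset_closedBall 0
  refine ⟨-((R + ‖z‖) / ‖x‖), fun t ht => ?_⟩
  have h1 : ‖z + t • x‖ ≤ R := by
    have := hR ht
    simpa [Metric.mem_closedBall, dist_zero_right] using this
  have h2 : ‖t • x‖ ≤ R + ‖z‖ := by
    have he : t • x = (z + t • x) - z := by abel
    rw [he]
    calc ‖(z + t • x) - z‖ ≤ ‖z + t • x‖ + ‖z‖ := norm_sub_le _ _
    _ ≤ R + ‖z‖ := by linarith
  have hxpos : (0:ℝ) < ‖x‖ := norm_pos_iff.mpr hx0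
  have h3 : |t| * ‖x‖ ≤ R + ‖z‖ := by rwa [norm_smul, Real.norm_eq_abs] at h2
  have h4 : |t| ≤ (R + ‖z‖) / ‖x‖ := (le_div_iff₀ hxpos).mpr h3
  have := neg_abs_le t
  linarith

lemma Tset_nonempty {K : Set E} {x : E} (hx0 : x ≠ 0) {z : E} (hz : z ∈ shadow K x) : (Tset K x z).Nonempty := by
  obtain ⟨a, ha, rfl⟩ := hz
  refine ⟨coefX x a, ?_⟩
  show projHyp x a + coefX x a • x ∈ K
  rw [← decomp x hx0 a]
  exact ha

lemma shadow_projHyp {K : Set E} {x : E} {z : E} (hz : z ∈ shadow K x) : projHyp x z = z := by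
  obtain ⟨a, _, rfl⟩ := hz
  exact projHyp_eq_self (projHyp_mem x a)

lemma shadow_inner {K : Set E} {x : E} {z : E} (hz : z ∈ shadow K x) : (inner ℝ x z : ℝ) = 0 := by
  obtain ⟨a, _, rfl⟩ := hz
  exact inner_x_projHyp x a

lemma sInf_Tset_mem {K : Set E} {x : E} (hKc : IsCompact K) (hx0 : x ≠ 0) {z : E} (hz : z ∈ shadow K x) :
    sInf (Tset K x z) ∈ Tset K x z :=
  (Tset_closed hKc).csInf_mem (Tset_nonempty hx0 hz) (Tset_bddBelow hKc hx0)

lemma piK_mem {K : Set E} {x : E} (hKc : IsCompact K) (hx0 : x ≠ 0) {z : E} (hz : z ∈ shadow K x) :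
    piK K x z ∈ K :=
  sInf_Tset_mem hKc hx0 hz

def Jset (K : Set E) (x z : E) : Set ℝ :=
  {s : ℝ | s ∈ Icc (0:ℝ) 1 ∧ AffineMap.lineMap x (piK K x z) s ∈ K}

noncomputable def sE (K : Set E) (x z : E) : ℝ := sInf (Jset K x z)

lemma one_mem_Jset {K : Set E} {x : E} (hKc : IsCompact K) (hx0 : x ≠ 0) {z : E} (hz : z ∈ shadow K x) :
    1 ∈ Jset K x z := by
  refine ⟨⟨zero_le_one, le_refl 1⟩, ?_⟩
  rw [AffineMap.lineMap_apply_one]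
  exact piK_mem hKc hx0 hz

lemma Jset_bddBelow {K : Set E} {x : E} {z : E} : BddBelow (Jset K x z) := ⟨0, fun s hs => hs.1.1⟩

lemma Jset_closed {K : Set E} {x : E} (hKc : IsCompact K) {z : E} : IsClosed (Jset K x z) := by
  have : Jset K x z = Icc (0:ℝ) 1 ∩ (fun s : ℝ => AffineMap.lineMap x (piK K x z) s) ⁻¹' K := rfl
  rw [this]
  refine isClosed_Icc.inter (hKc.isClosed.preimage ?_)
  simp only [AffineMap.lineMap_apply_module']
  continuity

lemma Jset_convex {K : Set E} {x : E} (hKconv : Convex ℝ K) {z : E} : Convex ℝ (Jset K x z) := by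
  intro s₁ h₁ s₂ h₂ a b ha hb hab
  refine ⟨(convex_Icc (0:ℝ) 1) h₁.1 h₂.1 ha hb hab, ?_⟩
  have key : AffineMap.lineMap x (piK K x z) (a • s₁ + b • s₂)
      = a • AffineMap.lineMap x (piK K x z) s₁ + b • AffineMap.lineMap x (piK K x z) s₂ := by
    simp only [AffineMap.lineMap_apply_module', smul_eq_mul]
    match_scalars <;> nlinarith [hab]
  rw [key]
  exact hKconv h₁.2 h₂.2 ha hb hab

lemma sE_mem {K : Set E} {x : E} (hKc : IsCompact K) (hx0 : x ≠ 0) {z : E} (hz : z ∈ shadow K x) :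
    sE K x z ∈ Jset K x z :=
  (Jset_closed hKc).csInf_mem ⟨1, one_mem_Jset hKc hx0 hz⟩ Jset_bddBelow

lemma sE_nonneg {K : Set E} {x : E} (hKc : IsCompact K) (hx0 : x ≠ 0) {z : E} (hz : z ∈ shadow K x) :
    0 ≤ sE K x z := (sE_mem hKc hx0 hz).1.1

lemma sE_le_one {K : Set E} {x : E} (hKc : IsCompact K) (hx0 : x ≠ 0) {z : E} (hz : z ∈ shadow K x) :
    sE K x z ≤ 1 := (sE_mem hKc hx0 hz).1.2

lemma Jset_eq_Icc {K : Set E} {x : E} (hKc : IsCompact K) (hKconv : Convex ℝ K) (hx0 : x ≠ 0) {z : E}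
    (hz : z ∈ shadow K x) : Jset K x z = Icc (sE K x z) 1 := by
  apply Subset.antisymm
  · intro s hs
    exact ⟨csInf_le Jset_bddBelow hs, hs.1.2⟩
  · exact (Jset_convex hKconv).ordConnected.out (sE_mem hKc hx0 hz) (one_mem_Jset hKc hx0 hz)

lemma inter_segment_eq {K : Set E} {x : E} (hKc : IsCompact K) (hKconv : Convex ℝ K) (hx0 : x ≠ 0) {z : E}
    (hz : z ∈ shadow K x) :
    K ∩ segment ℝ x (piK K x z)
      = AffineMap.lineMap x (piK K x z) '' Icc (sE K x z) 1 := by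
  rw [segment_eq_image_lineMap, ← Jset_eq_Icc hKc hKconv hx0 hz]
  ext y
  constructor
  · rintro ⟨hyK, s, hs, rfl⟩
    exact ⟨s, ⟨hs, hyK⟩, rfl⟩
  · rintro ⟨s, ⟨hsI, hsK⟩, rfl⟩
    exact ⟨hsK, s, hsI, rfl⟩

lemma psiPt_eq {K : Set E} {x : E} (hKc : IsCompact K) (hKconv : Convex ℝ K) (hxK : x ∉ K) (hx0 : x ≠ 0) {z : E}
    (hz : z ∈ shadow K x) : PsiPt K x z = 1 - sE K x z := by
  have hπK : piK K x z ∈ K := piK_mem hKc hx0 hz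
  have hπ : piK K x z ≠ x := fun h => hxK (h ▸ hπK)
  have hdist : (0:ℝ) < dist x (piK K x z) := dist_pos.mpr (Ne.symm hπ)
  unfold PsiPt
  rw [inter_segment_eq hKc hKconv hx0 hz, hausdorffMeasure_lineMap_image, hausdorffMeasure_real,
    Real.volume_Icc, hausdorffMeasure_segment, edist_nndist, ENNReal.smul_def, smul_eq_mul,
    ENNReal.toReal_div, ENNReal.toReal_mul, ENNReal.coe_toReal, coe_nndist,
    ENNReal.toReal_ofReal (by linarith [sE_le_one hKc hx0 hz])]
  exact mul_div_cancel_left₀ _ hdist.ne'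

end Body

section Scaling

lemma combo_mem {A : Set E} (hconv : Convex ℝ A) (h0 : (0:E) ∈ A) {p q : E} (hp : p ∈ A)
    (hq : q ∈ A) {a b : ℝ} (ha : 0 ≤ a) (hb : 0 ≤ b) (hab : a + b ≤ 1) : a • p + b • q ∈ A := by
  rcases eq_or_lt_of_le (add_nonneg ha hb) with h | h
  · have ha0 : a = 0 := by linarith [abs_nonneg a]
    have hb0 : b = 0 := by linarith
    simpa [ha0, hb0] using h0
  · have hm : (a / (a + b)) • p + (b / (a + b)) • q ∈ A :=
      hconv hp hq (div_nonneg ha h.le) (div_nonneg hb h.le) (by field_simp)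
    have hfin : (a + b) • ((a / (a + b)) • p + (b / (a + b)) • q) + (1 - (a + b)) • (0:E) ∈ A :=
      hconv hm h0 h.le (by linarith) (by ring)
    have : (a + b) • ((a / (a + b)) • p + (b / (a + b)) • q) + (1 - (a + b)) • (0:E)
        = a • p + b • q := by
      rw [smul_zero, add_zero, smul_add, smul_smul, smul_smul]
      rw [mul_div_cancel₀ _ h.ne', mul_div_cancel₀ _ h.ne']
    rwa [this] at hfin

lemma shadow_smul {γ : ℝ} (K : Set E) (x : E) : shadow (γ • K) x = γ • shadow K x := by
  unfold shadow
  rw [← Set.image_smul, ← Set.image_smul, Set.image_image, Set.image_image]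
  exact Set.image_congr fun a _ => projHyp_smul x γ a

lemma Tset_smul {γ : ℝ} (hγ0 : 0 < γ) (K : Set E) (x z : E) :
    Tset (γ • K) x (γ • z) = γ • Tset K x z := by
  ext t
  constructor
  · intro h
    have h' : γ • z + t • x ∈ γ • K := h
    rw [Set.mem_smul_set] at h'
    obtain ⟨k, hk, he⟩ := h'
    refine ⟨t / γ, ?_, ?_⟩
    · have hke : k = z + (t / γ) • x := by
        have := congrArg (fun w => γ⁻¹ • w) he
        simp only [inv_smul_smul₀ hγ0.ne'] at this
        rw [this, smul_add, inv_smul_smul₀ hγ0.ne', smul_smul]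
        congr 1
        rw [div_eq_inv_mul]
      show z + (t / γ) • x ∈ K
      rw [← hke]
      exact hk
    · show γ • (t / γ) = t
      rw [smul_eq_mul]
      field_simp
  · rintro ⟨s, hs, rfl⟩
    show γ • z + (γ • s) • x ∈ γ • K
    have : γ • z + (γ • s) • x = γ • (z + s • x) := by
      rw [smul_add, smul_eq_mul, smul_smul]
    rw [this]
    exact Set.smul_mem_smul_set hs

lemma piK_smul {γ : ℝ} (hγ0 : 0 < γ) (K : Set E) (x z : E) :
    piK (γ • K) x (γ • z) = γ • piK K x z := by
  show γ • z + sInf (Tset (γ • K) x (γ • z)) • x = γ • (z + sInf (Tset K x z) • x)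
  rw [Tset_smul hγ0, Real.sInf_smul_of_nonneg hγ0.le, smul_add, smul_smul, smul_eq_mul]

lemma sE_smul_le {A : Set E} {x : E} (hAc : IsCompact A) (hAconv : Convex ℝ A)
    (h0 : (0:E) ∈ A) (hx0 : x ≠ 0) {γ : ℝ} (hγ : 1 < γ) {z : E} (hz : z ∈ shadow A x) :
    sE (γ • A) x (γ • z) ≤ sE A x z := by
  have hγ0 : (0:ℝ) < γ := lt_trans one_pos hγ
  refine csInf_le_csInf Jset_bddBelow ⟨1, one_mem_Jset hAc hx0 hz⟩ ?_
  rintro s ⟨hsI, hsK⟩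
  refine ⟨hsI, ?_⟩
  rw [piK_smul hγ0]
  set π := piK A x z with hπdef
  have hπA : π ∈ A := piK_mem hAc hx0 hz
  have hq : s • (π - x) + x ∈ A := by rwa [AffineMap.lineMap_apply_module'] at hsK
  rw [AffineMap.lineMap_apply_module']
  have key : s • (γ • π - x) + x
      = γ • (γ⁻¹ • (s • (π - x) + x) + (s * (1 - γ⁻¹)) • π) := by
    match_scalars
    · field_simp
      ring
    · field_simp
  rw [key]
  refine Set.smul_mem_smul_set ?_
  have hbnn : 0 ≤ s * (1 - γ⁻¹) := by
    have : γ⁻¹ ≤ 1 := by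
      rw [inv_le_one_iff₀]
      right; exact hγ.le
    exact mul_nonneg hsI.1 (by linarith)
  have hinv : (0:ℝ) < γ⁻¹ := inv_pos.mpr hγ0
  have hinvle : γ⁻¹ ≤ 1 := by
    rw [inv_le_one_iff₀]; right; exact hγ.le
  have habs : γ⁻¹ + s * (1 - γ⁻¹) ≤ 1 := by
    nlinarith [mul_nonneg (sub_nonneg.mpr hsI.2) (sub_nonneg.mpr hinvle)]
  exact combo_mem hAconv h0 hq hπA hinv.le hbnn habs

end Scaling

section Measurability

lemma shadow_compact {K : Set E} {x : E} (hKc : IsCompact K) : IsCompact (shadow K x) :=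
  hKc.image (projHyp_continuous x)

lemma shadow_measurableSet {K : Set E} {x : E} (hKc : IsCompact K) :
    MeasurableSet (shadow K x) :=
  (shadow_compact hKc).isClosed.measurableSet

noncomputable def Ftil (K : Set E) (x : E) : E → ℝ :=
  (shadow K x).indicator fun z => sInf (Tset K x z)

lemma sublevel_eq {K : Set E} {x : E} (hKc : IsCompact K) (hx0 : x ≠ 0) (a : ℝ) :
    {z | z ∈ shadow K x ∧ sInf (Tset K x z) ≤ a}
      = projHyp x '' (K ∩ {y | (inner ℝ x y : ℝ) ≤ a * ‖x‖ ^ 2}) := by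
  have hx2 : (0:ℝ) < ‖x‖ ^ 2 := by
    have := norm_pos_iff.mpr hx0
    positivity
  ext z
  constructor
  · rintro ⟨hzS, hle⟩
    have hmem := sInf_Tset_mem hKc hx0 hzS
    refine ⟨z + sInf (Tset K x z) • x, ⟨hmem, ?_⟩, ?_⟩
    · show (inner ℝ x (z + sInf (Tset K x z) • x) : ℝ) ≤ a * ‖x‖ ^ 2
      rw [inner_add_right, real_inner_smul_right, shadow_inner hzS,
        real_inner_self_eq_norm_sq, zero_add]
      nlinarith
    · rw [projHyp_add_smul, shadow_projHyp hzS]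
  · rintro ⟨y, ⟨hyK, hyI⟩, rfl⟩
    refine ⟨⟨y, hyK, rfl⟩, ?_⟩
    have hmemT : coefX x y ∈ Tset K x (projHyp x y) := by
      show projHyp x y + coefX x y • x ∈ K
      rw [← decomp x hx0 y]
      exact hyK
    have hc : coefX x y ≤ a := by
      unfold coefX
      rw [div_le_iff₀ hx2]
      exact hyI
    exact le_trans (csInf_le (Tset_bddBelow hKc hx0) hmemT) hc

lemma Ftil_measurable {K : Set E} {x : E} (hKc : IsCompact K) (hx0 : x ≠ 0) :
    Measurable (Ftil K x) := by
  apply measurable_of_Iic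
  intro a
  have hset : MeasurableSet {z | z ∈ shadow K x ∧ sInf (Tset K x z) ≤ a} := by
    rw [sublevel_eq hKc hx0 a]
    refine ((hKc.inter_right ?_).image (projHyp_continuous x)).isClosed.measurableSet
    exact isClosed_le (Continuous.inner continuous_const continuous_id) continuous_const
  by_cases h0a : (0:ℝ) ≤ a
  · have heq : Ftil K x ⁻¹' Iic a
        = {z | z ∈ shadow K x ∧ sInf (Tset K x z) ≤ a} ∪ (shadow K x)ᶜ := by
      ext z
      by_cases hz : z ∈ shadow K x <;>
        simp [Ftil, Set.indicator_apply, hz, h0a]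
    rw [heq]
    exact hset.union (shadow_measurableSet hKc).compl
  · have heq : Ftil K x ⁻¹' Iic a = {z | z ∈ shadow K x ∧ sInf (Tset K x z) ≤ a} := by
      ext z
      by_cases hz : z ∈ shadow K x <;>
        simp [Ftil, Set.indicator_apply, hz, h0a]
    rw [heq]
    exact hset

noncomputable def Gfun (K : Set E) (x : E) : E → ℝ :=
  (shadow K x).indicator fun z => 1 - sE K x z

lemma sE_sublevel_eq {K : Set E} {x : E} (hKc : IsCompact K) (hKconv : Convex ℝ K)
    (hx0 : x ≠ 0) {a : ℝ} (h0a : 0 ≤ a) :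
    {z | z ∈ shadow K x ∧ sE K x z ≤ a}
      = shadow K x ∩ (fun z => min a 1 • ((z + Ftil K x z • x) - x) + x) ⁻¹' K := by
  ext z
  simp only [mem_inter_iff, mem_setOf_eq, mem_preimage]
  constructor
  · rintro ⟨hzS, hle⟩
    refine ⟨hzS, ?_⟩
    have hzF : Ftil K x z = sInf (Tset K x z) := Set.indicator_of_mem hzS _
    have hπ : z + Ftil K x z • x = piK K x z := by rw [hzF]; rfl
    rw [hπ]
    have hmem : min a 1 ∈ Jset K x z := by
      rw [Jset_eq_Icc hKc hKconv hx0 hzS]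
      exact ⟨le_min hle (sE_le_one hKc hx0 hzS), min_le_right a 1⟩
    have h2 := hmem.2
    rwa [AffineMap.lineMap_apply_module'] at h2
  · rintro ⟨hzS, hK⟩
    refine ⟨hzS, ?_⟩
    have hzF : Ftil K x z = sInf (Tset K x z) := Set.indicator_of_mem hzS _
    have hπ : z + Ftil K x z • x = piK K x z := by rw [hzF]; rfl
    rw [hπ] at hK
    have hmem : min a 1 ∈ Jset K x z := by
      refine ⟨⟨le_min h0a zero_le_one, min_le_right _ _⟩, ?_⟩
      rw [AffineMap.lineMap_apply_module']
      exact hK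
    exact le_trans (csInf_le Jset_bddBelow hmem) (min_le_left a 1)

lemma sE_set_measurable {K : Set E} {x : E} (hKc : IsCompact K) (hKconv : Convex ℝ K)
    (hx0 : x ≠ 0) (a : ℝ) :
    MeasurableSet {z | z ∈ shadow K x ∧ sE K x z ≤ a} := by
  rcases lt_or_ge a 0 with h | h
  · have heq : {z | z ∈ shadow K x ∧ sE K x z ≤ a} = ∅ := by
      ext z
      simp only [mem_setOf_eq, mem_empty_iff_false, iff_false, not_and]
      intro hz hle
      linarith [sE_nonneg hKc hx0 hz]
    rw [heq]; exact MeasurableSet.empty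
  · rw [sE_sublevel_eq hKc hKconv hx0 h]
    refine (shadow_measurableSet hKc).inter ?_
    have hF : Measurable (Ftil K x) := Ftil_measurable hKc hx0
    have hg : Measurable fun z : E => min a 1 • ((z + Ftil K x z • x) - x) + x := by
      apply Measurable.add_const
      refine Measurable.const_smul (g := fun z : E => (z + Ftil K x z • x) - x) ?_ (min a 1)
      exact (measurable_id.add (hF.smul_const x)).sub_const x
    exact hg hKc.isClosed.measurableSet

lemma Gfun_measurable {K : Set E} {x : E} (hKc : IsCompact K) (hKconv : Convex ℝ K)
    (hx0 : x ≠ 0) : Measurable (Gfun K x) := by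
  have h2 : Measurable ((shadow K x).indicator fun z => sE K x z) := by
    apply measurable_of_Iic
    intro a
    by_cases h0a : (0:ℝ) ≤ a
    · have heq : ((shadow K x).indicator fun z => sE K x z) ⁻¹' Iic a
          = {z | z ∈ shadow K x ∧ sE K x z ≤ a} ∪ (shadow K x)ᶜ := by
        ext z
        by_cases hz : z ∈ shadow K x <;> simp [Set.indicator_apply, hz, h0a]
      rw [heq]
      exact (sE_set_measurable hKc hKconv hx0 a).union (shadow_measurableSet hKc).compl
    · have heq : ((shadow K x).indicator fun z => sE K x z) ⁻¹' Iic a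
          = {z | z ∈ shadow K x ∧ sE K x z ≤ a} := by
        ext z
        by_cases hz : z ∈ shadow K x <;> simp [Set.indicator_apply, hz, h0a]
      rw [heq]
      exact sE_set_measurable hKc hKconv hx0 a
  have h1 : Measurable ((shadow K x).indicator fun _ : E => (1:ℝ)) :=
    measurable_const.indicator (shadow_measurableSet hKc)
  have heq : Gfun K x = fun z =>
      (shadow K x).indicator (fun _ => (1:ℝ)) z
        - (shadow K x).indicator (fun z => sE K x z) z := by
    funext z
    by_cases hz : z ∈ shadow K x <;> simp [Gfun, Set.indicator_apply, hz]
  rw [heq]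
  exact h1.sub h2

lemma Gfun_eqOn {K : Set E} {x : E} (hKc : IsCompact K) (hKconv : Convex ℝ K)
    (hxK : x ∉ K) (hx0 : x ≠ 0) : EqOn (PsiPt K x) (Gfun K x) (shadow K x) := fun z hz => by
  rw [psiPt_eq hKc hKconv hxK hx0 hz]
  exact (Set.indicator_of_mem hz fun z => 1 - sE K x z).symm

lemma Gfun_abs_le {K : Set E} {x : E} (hKc : IsCompact K) (hx0 : x ≠ 0) (z : E) :
    |Gfun K x z| ≤ 1 := by
  by_cases hz : z ∈ shadow K x
  · rw [Gfun, Set.indicator_of_mem hz, abs_le]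
    constructor
    · linarith [sE_le_one hKc hx0 hz]
    · linarith [sE_nonneg hKc hx0 hz]
  · rw [Gfun, Set.indicator_of_notMem hz]
    simp

end Measurability

section MeasureChange

open ENNReal

lemma hausdorff_smul_set {s : ℝ} (hs : 0 ≤ s) {γ : ℝ} (hγ0 : 0 < γ) (B : Set E) :
    μH[s] (γ • B) = ((‖γ‖₊ : ℝ≥0∞) ^ s) * μH[s] B := by
  rw [MeasureTheory.Measure.hausdorffMeasure_smul₀ hs hγ0.ne' B, ENNReal.smul_def,
    ENNReal.coe_rpow_of_nonneg _ hs, smul_eq_mul]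

lemma map_smul_hausdorff {s : ℝ} (hs : 0 ≤ s) {γ : ℝ} (hγ0 : 0 < γ) :
    Measure.map (fun z : E => γ • z) μH[s]
      = ((‖γ⁻¹‖₊ : ℝ≥0∞) ^ s) • (μH[s] : Measure E) := by
  refine Measure.ext fun B hB => ?_
  rw [Measure.map_apply ((continuous_const_smul γ).measurable) hB, Measure.smul_apply,
    Set.preimage_smul₀ hγ0.ne' B,
    MeasureTheory.Measure.hausdorffMeasure_smul₀ hs (inv_ne_zero hγ0.ne') B,
    ENNReal.smul_def, ENNReal.coe_rpow_of_nonneg _ hs, smul_eq_mul]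

lemma setIntegral_smul_set {s : ℝ} (hs : 0 ≤ s) {γ : ℝ} (hγ0 : 0 < γ) (B : Set E)
    (hB : MeasurableSet B) (g : E → ℝ) (hg : Measurable g) :
    ∫ w in γ • B, g w ∂(μH[s] : Measure E)
      = (γ ^ s) * ∫ z in B, g (γ • z) ∂(μH[s] : Measure E) := by
  have hφ : Measurable (fun z : E => γ • z) := (continuous_const_smul γ).measurable
  have hBs : MeasurableSet (γ • B) := by
    have h : γ • B = (fun z : E => γ⁻¹ • z) ⁻¹' B := (Set.preimage_smul_inv₀ hγ0.ne' B).symm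
    rw [h]
    exact (continuous_const_smul γ⁻¹).measurable hB
  have hrestrict : Measure.map (fun z : E => γ • z) ((μH[s] : Measure E).restrict B)
      = ((‖γ⁻¹‖₊ : ℝ≥0∞) ^ s) • ((μH[s] : Measure E).restrict (γ • B)) := by
    have h1 : ((μH[s] : Measure E).restrict B)
        = (μH[s] : Measure E).restrict ((fun z : E => γ • z) ⁻¹' (γ • B)) := by
      congr 1
      rw [Set.preimage_smul₀ hγ0.ne', smul_smul, inv_mul_cancel₀ hγ0.ne', one_smul]
    rw [h1, ← Measure.restrict_map hφ hBs, map_smul_hausdorff hs hγ0, Measure.restrict_smul]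
  have h2 : ∫ z in B, g (γ • z) ∂(μH[s] : Measure E)
      = (γ⁻¹ ^ s) * ∫ w in γ • B, g w ∂(μH[s] : Measure E) := by
    rw [← integral_map hφ.aemeasurable hg.aestronglyMeasurable, hrestrict,
      integral_smul_measure]
    congr 1
    rw [← ENNReal.toReal_rpow, ENNReal.coe_toReal, coe_nnnorm, Real.norm_eq_abs,
      abs_of_pos (inv_pos.mpr hγ0)]
  rw [h2, ← mul_assoc, ← Real.mul_rpow hγ0.le (inv_nonneg.mpr hγ0.le),
    mul_inv_cancel₀ hγ0.ne', Real.one_rpow, one_mul]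

end MeasureChange

end PsiAux

open ENNReal NNReal

theorem psi_monotone {d : ℕ} (A : Set (EuclideanSpace ℝ (Fin d)))
    (hAc : IsCompact A) (hAconv : Convex ℝ A) (hAint : (interior A).Nonempty)
    (h0 : (0 : EuclideanSpace ℝ (Fin d)) ∈ A)
    (γ : ℝ) (hγ : 1 < γ)
    (x : EuclideanSpace ℝ (Fin d)) (hx : x ∉ γ • A) :
    PsiAvg A x ≤ PsiAvg (γ • A) x := by
  have hγ0 : (0:ℝ) < γ := lt_trans one_pos hγ
  have hx0 : x ≠ 0 := by
    rintro rfl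
    exact hx ⟨0, h0, smul_zero γ⟩
  have hγAc : IsCompact (γ • A) := by
    rw [← Set.image_smul]
    exact hAc.image (continuous_const_smul γ)
  have hγAconv : Convex ℝ (γ • A) := hAconv.smul γ
  have hinvle : γ⁻¹ ≤ 1 := by
    rw [inv_le_one_iff₀]; right; exact hγ.le
  have hxA : x ∉ A := by
    intro hxa
    refine hx ⟨γ⁻¹ • x, ?_, smul_inv_smul₀ hγ0.ne' x⟩
    have hmem : γ⁻¹ • x + (1 - γ⁻¹) • (0 : EuclideanSpace ℝ (Fin d)) ∈ A :=
      hAconv hxa h0 (inv_pos.mpr hγ0).le (by linarith) (by ring)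
    simpa using hmem
  have hs : (0:ℝ) ≤ (d:ℝ) - 1 := by
    have hd : 1 ≤ d := by
      by_contra hcontra
      have hd0 : d = 0 := by omega
      subst hd0
      exact hx0 (Subsingleton.elim x 0)
    have h1d : (1:ℝ) ≤ (d:ℝ) := by exact_mod_cast hd
    linarith
  set S := shadow A x with hSdef
  have hSm : MeasurableSet S := PsiAux.shadow_measurableSet hAc
  have hGA : Measurable (PsiAux.Gfun A x) := PsiAux.Gfun_measurable hAc hAconv hx0
  have hGγ : Measurable (PsiAux.Gfun (γ • A) x) := PsiAux.Gfun_measurable hγAc hγAconv hx0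
  have hshadowγ : shadow (γ • A) x = γ • S := PsiAux.shadow_smul A x
  have hnum1 : ∫ z in S, PsiPt A x z ∂(μH[(d:ℝ)-1])
      = ∫ z in S, PsiAux.Gfun A x z ∂(μH[(d:ℝ)-1]) :=
    setIntegral_congr_fun hSm (PsiAux.Gfun_eqOn hAc hAconv hxA hx0)
  have hSmγ : MeasurableSet (γ • S) := by
    rw [← hshadowγ]
    exact PsiAux.shadow_measurableSet hγAc
  have hnum2 : ∫ w in γ • S, PsiPt (γ • A) x w ∂(μH[(d:ℝ)-1])
      = ∫ w in γ • S, PsiAux.Gfun (γ • A) x w ∂(μH[(d:ℝ)-1]) := by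
    refine setIntegral_congr_fun hSmγ ?_
    rw [← hshadowγ]
    exact PsiAux.Gfun_eqOn hγAc hγAconv hx hx0
  have hCoV : ∫ w in γ • S, PsiAux.Gfun (γ • A) x w ∂(μH[(d:ℝ)-1])
      = γ ^ ((d:ℝ)-1) * ∫ z in S, PsiAux.Gfun (γ • A) x (γ • z) ∂(μH[(d:ℝ)-1]) :=
    PsiAux.setIntegral_smul_set hs hγ0 S hSm _ hGγ
  have hmeas_scale : μH[(d:ℝ)-1] (γ • S)
      = ((‖γ‖₊ : ℝ≥0∞) ^ ((d:ℝ)-1)) * μH[(d:ℝ)-1] S := PsiAux.hausdorff_smul_set hs hγ0 S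
  have hct : (((‖γ‖₊ : ℝ≥0∞)) ^ ((d:ℝ)-1)).toReal = γ ^ ((d:ℝ)-1) := by
    rw [← ENNReal.toReal_rpow, ENNReal.coe_toReal, coe_nnnorm, Real.norm_eq_abs,
      abs_of_pos hγ0]
  unfold PsiAvg
  rw [hshadowγ, hnum1, hnum2, hCoV, hmeas_scale, ENNReal.toReal_mul, hct]
  have hmnn : (0:ℝ) ≤ (μH[(d:ℝ)-1] S).toReal := ENNReal.toReal_nonneg
  rcases eq_or_lt_of_le hmnn with hm | hm
  · rw [← hm]
    simp
  · have hrpos : (0:ℝ) < γ ^ ((d:ℝ)-1) := Real.rpow_pos_of_pos hγ0 _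
    rw [mul_div_mul_left _ _ hrpos.ne']
    rw [div_le_div_iff_of_pos_right hm]
    -- integrability
    have hμSfin : μH[(d:ℝ)-1] S ≠ ⊤ := by
      intro htop
      rw [htop] at hm
      simp at hm
    haveI : IsFiniteMeasure ((μH[(d:ℝ)-1] : Measure (EuclideanSpace ℝ (Fin d))).restrict S) := by
      constructor
      rw [Measure.restrict_apply_univ]
      exact lt_top_iff_ne_top.mpr hμSfin
    have int1 : IntegrableOn (PsiAux.Gfun A x) S (μH[(d:ℝ)-1]) := by
      refine Integrable.mono' (integrable_const 1) hGA.aestronglyMeasurable ?_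
      refine ae_of_all _ fun z => ?_
      rw [Real.norm_eq_abs]
      exact PsiAux.Gfun_abs_le hAc hx0 z
    have int2 : IntegrableOn (fun z => PsiAux.Gfun (γ • A) x (γ • z)) S (μH[(d:ℝ)-1]) := by
      refine Integrable.mono' (integrable_const 1)
        ((hGγ.comp ((continuous_const_smul γ).measurable)).aestronglyMeasurable) ?_
      refine ae_of_all _ fun z => ?_
      rw [Real.norm_eq_abs]
      exact PsiAux.Gfun_abs_le hγAc hx0 (γ • z)
    refine setIntegral_mono_on int1 int2 hSm fun z hz => ?_
    have hzγ : γ • z ∈ shadow (γ • A) x := by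
      rw [hshadowγ]
      exact Set.smul_mem_smul_set hz
    rw [PsiAux.Gfun, Set.indicator_of_mem hz, PsiAux.Gfun, Set.indicator_of_mem hzγ]
    have := PsiAux.sE_smul_le hAc hAconv h0 hx0 hγ hz
    linarith
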